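/- Let H be a finite-dimensional complex Hilbert space with distinguished unit vector φ₀ and P = |φ₀⟩⟨φ₀|, E_P = P ⊗ 1 + 1 ⊗ P − P ⊗ P. Let Ψ ∈ H ⊗ H be a unit vector that is antisymmetric (i.e., SΨ = −Ψ where S is the swap operator). If E_P Ψ = Ψ, then there exists a unit vector Υ ∈ H orthogonal to φ₀ such that Ψ = (1/√2)(φ₀ ⊗ Υ − Υ ⊗ φ₀). -/

import Mathlib

open Matrix Kronecker

/-- Rank-one operator `|φ⟩⟨φ|` on `ℂ^n`. -/
noncomputable def proj {n : ℕ} (φ : Fin n → ℂ) : Matrix (Fin n) (Fin n) ℂ :=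
  vecMulVec φ (star φ)

/-- Elementary tensor of two vectors. -/
def tp {n : ℕ} (x y : Fin n → ℂ) : Fin n × Fin n → ℂ := fun p => x p.1 * y p.2

theorem stmt8 {n : ℕ} (φ₀ : Fin n → ℂ) (hφ₀ : star φ₀ ⬝ᵥ φ₀ = 1)
    (Ψ : Fin n × Fin n → ℂ) (hΨ : star Ψ ⬝ᵥ Ψ = 1)
    (hanti : ∀ p : Fin n × Fin n, Ψ (p.2, p.1) = -Ψ p)
    (hfix :
      (proj φ₀ ⊗ₖ (1 : Matrix (Fin n) (Fin n) ℂ)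
        + (1 : Matrix (Fin n) (Fin n) ℂ) ⊗ₖ proj φ₀
        - proj φ₀ ⊗ₖ proj φ₀) *ᵥ Ψ = Ψ) :
    ∃ Υ : Fin n → ℂ, star Υ ⬝ᵥ Υ = 1 ∧ star φ₀ ⬝ᵥ Υ = 0 ∧
      Ψ = (Real.sqrt 2)⁻¹ • (tp φ₀ Υ - tp Υ φ₀) := by
  classical
  set a : Fin n → ℂ := fun j => ∑ x, (starRingEnd ℂ) (φ₀ x) * Ψ (x, j) with ha
  -- the doubly contracted scalar vanishes by antisymmetry
  have hc : ∑ x : Fin n, ∑ y : Fin n,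
      (starRingEnd ℂ) (φ₀ x) * (starRingEnd ℂ) (φ₀ y) * Ψ (x, y) = 0 := by
    set c := ∑ x : Fin n, ∑ y : Fin n,
      (starRingEnd ℂ) (φ₀ x) * (starRingEnd ℂ) (φ₀ y) * Ψ (x, y) with hcdef
    have hne : c = -c := by
      calc c = ∑ y : Fin n, ∑ x : Fin n,
          (starRingEnd ℂ) (φ₀ x) * (starRingEnd ℂ) (φ₀ y) * Ψ (x, y) := Finset.sum_comm
        _ = ∑ y : Fin n, ∑ x : Fin n,
          -((starRingEnd ℂ) (φ₀ y) * (starRingEnd ℂ) (φ₀ x) * Ψ (y, x)) := by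
            refine Finset.sum_congr rfl fun y _ => Finset.sum_congr rfl fun x _ => ?_
            have := hanti (y, x)
            simp only at this
            rw [this]; ring
        _ = -c := by rw [hcdef]; simp [Finset.sum_neg_distrib]
    linear_combination hne / 2
  -- pointwise formula
  have hpt : ∀ i j : Fin n, Ψ (i, j) = φ₀ i * a j - φ₀ j * a i := by
    intro i j
    have h := congrFun hfix (i, j)
    simp only [Matrix.mulVec, dotProduct, Matrix.sub_apply, Matrix.add_apply,
      Matrix.kroneckerMap_apply, proj, vecMulVec_apply, Matrix.one_apply,
      Fintype.sum_prod_type, Pi.star_apply, RCLike.star_def, mul_ite, mul_one, mul_zero,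
      ite_mul, zero_mul, Finset.sum_ite_irrel, Finset.sum_const_zero,
      Finset.sum_ite_eq, Finset.sum_ite_eq', Finset.mem_univ, if_true] at h
    rw [← h]
    have t1 : ∑ x, φ₀ i * (starRingEnd ℂ) (φ₀ x) * Ψ (x, j) = φ₀ i * a j := by
      rw [ha, Finset.mul_sum]; exact Finset.sum_congr rfl fun x _ => by ring
    have t2 : ∑ x, φ₀ j * (starRingEnd ℂ) (φ₀ x) * Ψ (i, x) = -(φ₀ j * a i) := by
      rw [ha, Finset.mul_sum, ← Finset.sum_neg_distrib]
      refine Finset.sum_congr rfl fun x _ => ?_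
      have := hanti (x, i)
      simp only at this
      rw [this]; ring
    have t3 : ∑ x : Fin n, ∑ y : Fin n,
        φ₀ i * (starRingEnd ℂ) (φ₀ x) * (φ₀ j * (starRingEnd ℂ) (φ₀ y)) * Ψ (x, y) = 0 := by
      have : ∑ x : Fin n, ∑ y : Fin n,
          φ₀ i * (starRingEnd ℂ) (φ₀ x) * (φ₀ j * (starRingEnd ℂ) (φ₀ y)) * Ψ (x, y)
          = φ₀ i * φ₀ j * ∑ x : Fin n, ∑ y : Fin n,
            (starRingEnd ℂ) (φ₀ x) * (starRingEnd ℂ) (φ₀ y) * Ψ (x, y) := by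
        rw [Finset.mul_sum]
        refine Finset.sum_congr rfl fun x _ => ?_
        rw [Finset.mul_sum]
        exact Finset.sum_congr rfl fun y _ => by ring
      rw [this, hc, mul_zero]
    simp only [sub_mul, add_mul, ite_mul, zero_mul, one_mul,
      Finset.sum_sub_distrib, Finset.sum_add_distrib, Finset.sum_ite_irrel,
      Finset.sum_const_zero, Finset.sum_ite_eq, Finset.sum_ite_eq',
      Finset.mem_univ, if_true]
    rw [t1, t2, t3]
    ring
  -- orthogonality of a to φ₀
  have hpa : ∑ j, (starRingEnd ℂ) (φ₀ j) * a j = 0 := by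
    calc ∑ j, (starRingEnd ℂ) (φ₀ j) * a j
        = ∑ j, ∑ x, (starRingEnd ℂ) (φ₀ x) * (starRingEnd ℂ) (φ₀ j) * Ψ (x, j) := by
          refine Finset.sum_congr rfl fun j _ => ?_
          rw [ha]; simp only; rw [Finset.mul_sum]
          exact Finset.sum_congr rfl fun x _ => by ring
      _ = ∑ x, ∑ j, (starRingEnd ℂ) (φ₀ x) * (starRingEnd ℂ) (φ₀ j) * Ψ (x, j) :=
          Finset.sum_comm
      _ = 0 := hc
  have hpa' : ∑ j, (starRingEnd ℂ) (a j) * φ₀ j = 0 := by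
    have : ∑ j, (starRingEnd ℂ) (a j) * φ₀ j
        = (starRingEnd ℂ) (∑ j, (starRingEnd ℂ) (φ₀ j) * a j) := by
      rw [map_sum]
      exact Finset.sum_congr rfl fun j _ => by simp [mul_comm]
    rw [this, hpa, map_zero]
  have hA : ∑ j, (starRingEnd ℂ) (φ₀ j) * φ₀ j = 1 := by
    rw [← hφ₀, dotProduct]
    exact Finset.sum_congr rfl fun j _ => by simp [RCLike.star_def]
  -- norm of a
  have hT : ∑ j, (starRingEnd ℂ) (a j) * a j = 1 / 2 := by
    have h1 : (1 : ℂ) = ∑ i, ∑ j, (starRingEnd ℂ) (Ψ (i, j)) * Ψ (i, j) := by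
      rw [← hΨ, dotProduct, Fintype.sum_prod_type]
      exact Finset.sum_congr rfl fun i _ => Finset.sum_congr rfl fun j _ => by
        simp [RCLike.star_def]
    have h2 : ∑ i, ∑ j, (starRingEnd ℂ) (Ψ (i, j)) * Ψ (i, j)
        = (∑ i, (starRingEnd ℂ) (φ₀ i) * φ₀ i) * (∑ j, (starRingEnd ℂ) (a j) * a j)
          + (∑ i, (starRingEnd ℂ) (a i) * a i) * (∑ j, (starRingEnd ℂ) (φ₀ j) * φ₀ j)
          - (∑ i, (starRingEnd ℂ) (φ₀ i) * a i) * (∑ j, (starRingEnd ℂ) (a j) * φ₀ j)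
          - (∑ i, (starRingEnd ℂ) (a i) * φ₀ i) * (∑ j, (starRingEnd ℂ) (φ₀ j) * a j) := by
      rw [Finset.sum_mul_sum, Finset.sum_mul_sum, Finset.sum_mul_sum, Finset.sum_mul_sum]
      rw [← Finset.sum_add_distrib, ← Finset.sum_sub_distrib, ← Finset.sum_sub_distrib]
      refine Finset.sum_congr rfl fun i _ => ?_
      rw [← Finset.sum_add_distrib, ← Finset.sum_sub_distrib, ← Finset.sum_sub_distrib]
      refine Finset.sum_congr rfl fun j _ => ?_
      rw [hpt i j]
      simp only [map_sub, _root_.map_mul]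
      ring
    rw [h2, hA, hpa, hpa'] at h1
    linear_combination -h1 / 2
  -- construct Υ
  have hs2 : ((Real.sqrt 2 : ℝ) : ℂ) ≠ 0 := by
    simp [Real.sqrt_eq_zero']
  have hs2sq : ((Real.sqrt 2 : ℝ) : ℂ) * ((Real.sqrt 2 : ℝ) : ℂ) = 2 := by
    rw [← Complex.ofReal_mul, Real.mul_self_sqrt (by norm_num)]
    norm_num
  refine ⟨fun i => ((Real.sqrt 2 : ℝ) : ℂ) * a i, ?_, ?_, ?_⟩
  · rw [dotProduct]
    have : ∀ j : Fin n, star (fun i => ((Real.sqrt 2 : ℝ) : ℂ) * a i) j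
        * (((Real.sqrt 2 : ℝ) : ℂ) * a j)
        = (((Real.sqrt 2 : ℝ) : ℂ) * ((Real.sqrt 2 : ℝ) : ℂ)) * ((starRingEnd ℂ) (a j) * a j) := by
      intro j
      simp only [Pi.star_apply, RCLike.star_def, _root_.map_mul, Complex.conj_ofReal]
      ring
    rw [Finset.sum_congr rfl fun j _ => this j, ← Finset.mul_sum, hT, hs2sq]
    norm_num
  · rw [dotProduct]
    have : ∀ j : Fin n, star φ₀ j * (((Real.sqrt 2 : ℝ) : ℂ) * a j)
        = ((Real.sqrt 2 : ℝ) : ℂ) * ((starRingEnd ℂ) (φ₀ j) * a j) := by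
      intro j
      simp only [Pi.star_apply, RCLike.star_def]
      ring
    rw [Finset.sum_congr rfl fun j _ => this j, ← Finset.mul_sum, hpa, mul_zero]
  · funext p
    obtain ⟨i, j⟩ := p
    simp only [Pi.smul_apply, Pi.sub_apply, tp, Complex.real_smul, Complex.ofReal_inv]
    rw [hpt i j]
    field_simp
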